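/- Let (α, μ) be a probability space, p ≥ 1, and let Ω̂ : α → (p×p real matrices) be a random matrix each of whose entries is square-integrable, with entrywise expectation E[Ω̂] = Ω. Assume Ω has unit diagonal (Ω_{ii} = 1 for all i) and that δ² := E[‖Ω̂ − I‖_F²] > 0. Let tr(Σ_Ω̂) := Σ_{i,j} Var(Ω̂_{ij}). Then the minimizer ρ* = E[‖Ω̂ − Ω‖_F²] / E[‖Ω̂ − I‖_F²] of ρ ↦ E[‖(1−ρ)Ω̂ + ρI − Ω‖_F²] satisfies the closed form ρ* = tr(Σ_Ω̂) / (tr(Σ_Ω̂) + tr(ΩᵀΩ) − p). -/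

import Mathlib

open MeasureTheory Matrix

/-- The scaled squared Frobenius norm `‖A‖_F² = tr(AᵀA)/p` of a `p × p` real matrix. -/
noncomputable def frobSq {p : ℕ} (A : Matrix (Fin p) (Fin p) ℝ) : ℝ :=
  Matrix.trace (Aᵀ * A) / p

lemma trace_transpose_mul_self_eq {p : ℕ} (A : Matrix (Fin p) (Fin p) ℝ) :
    Matrix.trace (Aᵀ * A) = ∑ i : Fin p, ∑ j : Fin p, (A i j) ^ 2 := by
  rw [Matrix.trace]
  simp [Matrix.diag, Matrix.mul_apply, Matrix.transpose_apply, sq]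
  exact Finset.sum_comm

lemma frobSq_eq {p : ℕ} (A : Matrix (Fin p) (Fin p) ℝ) :
    frobSq A = (∑ i : Fin p, ∑ j : Fin p, (A i j) ^ 2) / p := by
  unfold frobSq
  rw [trace_transpose_mul_self_eq]

lemma int_sq_sub {α : Type*} [MeasurableSpace α] (μ : Measure α) [IsProbabilityMeasure μ]
    (X : α → ℝ) (h : MemLp X 2 μ) (c : ℝ) :
    ∫ a, (X a - c) ^ 2 ∂μ
      = ((∫ a, X a ^ 2 ∂μ) - (∫ a, X a ∂μ) ^ 2) + ((∫ a, X a ∂μ) - c) ^ 2 := by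
  have hint : Integrable X μ := h.integrable (by norm_num)
  have hsq : Integrable (fun a => X a ^ 2) μ := h.integrable_sq
  have hcalc : (fun a => (X a - c) ^ 2) = fun a => X a ^ 2 - 2 * c * X a + c ^ 2 := by
    funext a; ring
  have h1 : ∫ a, (X a ^ 2 - 2 * c * X a + c ^ 2) ∂μ
      = (∫ a, (X a ^ 2 - 2 * c * X a) ∂μ) + ∫ a, (c ^ 2 : ℝ) ∂μ :=
    integral_add (hsq.sub (hint.const_mul _)) (integrable_const _)
  have h2 : ∫ a, (X a ^ 2 - 2 * c * X a) ∂μ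
      = (∫ a, X a ^ 2 ∂μ) - ∫ a, 2 * c * X a ∂μ :=
    integral_sub hsq (hint.const_mul _)
  rw [hcalc, h1, h2, MeasureTheory.integral_const_mul, integral_const]
  simp only [probReal_univ, measure_univ, ENNReal.toReal_one, smul_eq_mul, one_mul]
  ring

lemma int_frobSq {α : Type*} [MeasurableSpace α] (μ : Measure α) [IsProbabilityMeasure μ]
    {p : ℕ} (Ωhat : α → Matrix (Fin p) (Fin p) ℝ)
    (hL2 : ∀ i j, MemLp (fun a => Ωhat a i j) 2 μ)
    (C : Matrix (Fin p) (Fin p) ℝ) :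
    ∫ a, frobSq (Ωhat a - C) ∂μ
      = (∑ i : Fin p, ∑ j : Fin p,
          (((∫ a, (Ωhat a i j) ^ 2 ∂μ) - (∫ a, Ωhat a i j ∂μ) ^ 2)
            + ((∫ a, Ωhat a i j ∂μ) - C i j) ^ 2)) / p := by
  have hintg : ∀ i j, Integrable (fun a => (Ωhat a i j - C i j) ^ 2) μ :=
    fun i j => ((hL2 i j).sub (memLp_const _)).integrable_sq
  have hfro : ∀ a, frobSq (Ωhat a - C)
      = (∑ i : Fin p, ∑ j : Fin p, (Ωhat a i j - C i j) ^ 2) / p := by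
    intro a; rw [frobSq_eq]; simp [Matrix.sub_apply]
  calc ∫ a, frobSq (Ωhat a - C) ∂μ
      = ∫ a, (∑ i : Fin p, ∑ j : Fin p, (Ωhat a i j - C i j) ^ 2) / p ∂μ := by
        simp_rw [hfro]
    _ = (∫ a, ∑ i : Fin p, ∑ j : Fin p, (Ωhat a i j - C i j) ^ 2 ∂μ) / p :=
        integral_div _ _
    _ = (∑ i : Fin p, ∑ j : Fin p, ∫ a, (Ωhat a i j - C i j) ^ 2 ∂μ) / p := by
        rw [integral_finset_sum _
          (fun i _ => integrable_finset_sum _ (fun j _ => hintg i j))]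
        congr 1
        exact Finset.sum_congr rfl fun i _ => integral_finset_sum _ (fun j _ => hintg i j)
    _ = _ := by
        congr 1
        refine Finset.sum_congr rfl fun i _ => Finset.sum_congr rfl fun j _ => ?_
        exact int_sq_sub μ _ (hL2 i j) _

/-- Closed form for the optimal shrinkage weight: when `Ω = E[Ω̂]` has unit diagonal,
`ρ* = E[‖Ω̂ − Ω‖_F²]/E[‖Ω̂ − I‖_F²] = tr(Σ_Ω̂)/(tr(Σ_Ω̂) + tr(ΩᵀΩ) − p)`,
where `tr(Σ_Ω̂) = Σ_{i,j} Var(Ω̂_{ij})`. -/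
theorem shrinkage_weight_closed_form
    {α : Type*} [MeasurableSpace α] (μ : Measure α) [IsProbabilityMeasure μ]
    {p : ℕ} (hp : 1 ≤ p)
    (Ωhat : α → Matrix (Fin p) (Fin p) ℝ)
    (hL2 : ∀ i j, MemLp (fun a => Ωhat a i j) 2 μ)
    (Ω : Matrix (Fin p) (Fin p) ℝ)
    (hmean : ∀ i j, (∫ a, Ωhat a i j ∂μ) = Ω i j)
    (hdiag : ∀ i, Ω i i = 1)
    (hδpos : 0 < ∫ a, frobSq (Ωhat a - (1 : Matrix (Fin p) (Fin p) ℝ)) ∂μ)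
    (trSigOmegaHat : ℝ)
    (htr : trSigOmegaHat = ∑ i : Fin p, ∑ j : Fin p,
      ((∫ a, (Ωhat a i j) ^ 2 ∂μ) - (∫ a, Ωhat a i j ∂μ) ^ 2))
    (ρstar : ℝ)
    (hρstar : ρstar = (∫ a, frobSq (Ωhat a - Ω) ∂μ)
        / ∫ a, frobSq (Ωhat a - (1 : Matrix (Fin p) (Fin p) ℝ)) ∂μ) :
    ρstar = trSigOmegaHat / (trSigOmegaHat + Matrix.trace (Ωᵀ * Ω) - p) := by
  have hppos : (0 : ℝ) < p := by exact_mod_cast Nat.lt_of_lt_of_le Nat.zero_lt_one hp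
  -- numerator
  have hA : ∫ a, frobSq (Ωhat a - Ω) ∂μ = trSigOmegaHat / p := by
    rw [int_frobSq μ Ωhat hL2 Ω, htr]
    congr 1
    refine Finset.sum_congr rfl fun i _ => Finset.sum_congr rfl fun j _ => ?_
    rw [hmean i j]
    ring
  -- the bias term for the identity
  have hS : (∑ i : Fin p, ∑ j : Fin p,
      (Ω i j - (1 : Matrix (Fin p) (Fin p) ℝ) i j) ^ 2)
      = Matrix.trace (Ωᵀ * Ω) - p := by
    rw [trace_transpose_mul_self_eq]
    have hrow : ∀ i : Fin p, (∑ j : Fin p,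
        (Ω i j - (1 : Matrix (Fin p) (Fin p) ℝ) i j) ^ 2)
        = (∑ j : Fin p, (Ω i j) ^ 2) - 1 := by
      intro i
      have hterm : ∀ j : Fin p, (Ω i j - (1 : Matrix (Fin p) (Fin p) ℝ) i j) ^ 2
          = (Ω i j) ^ 2 - (if i = j then (1 : ℝ) else 0) := by
        intro j
        rw [Matrix.one_apply]
        split_ifs with h
        · subst h; rw [hdiag]; ring
        · ring
      simp_rw [hterm]
      rw [Finset.sum_sub_distrib]
      simp
    simp_rw [hrow]
    rw [Finset.sum_sub_distrib]
    simp [mul_comm]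
  -- denominator
  have hB : ∫ a, frobSq (Ωhat a - (1 : Matrix (Fin p) (Fin p) ℝ)) ∂μ
      = (trSigOmegaHat + (Matrix.trace (Ωᵀ * Ω) - p)) / p := by
    rw [int_frobSq μ Ωhat hL2 _]
    congr 1
    have : ∀ i j : Fin p,
        (((∫ a, (Ωhat a i j) ^ 2 ∂μ) - (∫ a, Ωhat a i j ∂μ) ^ 2)
          + ((∫ a, Ωhat a i j ∂μ) - (1 : Matrix (Fin p) (Fin p) ℝ) i j) ^ 2)
        = ((∫ a, (Ωhat a i j) ^ 2 ∂μ) - (∫ a, Ωhat a i j ∂μ) ^ 2)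
          + (Ω i j - (1 : Matrix (Fin p) (Fin p) ℝ) i j) ^ 2 := by
      intro i j; rw [hmean i j]
    simp_rw [this, Finset.sum_add_distrib]
    rw [← htr, hS]
  have hpos : 0 < trSigOmegaHat + (Matrix.trace (Ωᵀ * Ω) - p) := by
    have h := hδpos
    rw [hB] at h
    have := mul_pos h hppos
    rwa [div_mul_cancel₀] at this
    exact hppos.ne'
  rw [hρstar, hA, hB]
  rw [div_div_div_eq, show trSigOmegaHat + Matrix.trace (Ωᵀ * Ω) - (p : ℝ)
    = trSigOmegaHat + (Matrix.trace (Ωᵀ * Ω) - p) from by ring]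
  rw [mul_comm ((p : ℝ)) _, mul_div_mul_right _ _ hppos.ne']
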